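/- Let V_1 (n × p) and V_2 (n × q) have orthonormal columns, let M = [V_1, V_2]^T (stacked (p+q) × n) with SVD M = U_M Σ_M V_M^T, and suppose the i-th singular value σ_{M,i} is simple and greater than 1. Then the i-th left singular vector of M can be written as U_{M,i} = [u_{1,i}^T, u_{2,i}^T]^T / √2 where u_{1,i}, u_{2,i} are the i-th left and right singular vectors of V_1^T V_2, and the i-th right singular vector satisfies V_{M,i} = (V_1 u_{1,i} + V_2 u_{2,i}) / (√2 σ_{M,i}); i.e., the AJIVE joint direction is the scaled sum of the i-th pair of principal vectors p_i = V_1 u_{1,i} and q_i = V_2 u_{2,i}. -/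

import Mathlib

open Matrix

/-- View a plain vector as an element of Euclidean space. -/
noncomputable def toEuc {n : ℕ} (v : Fin n → ℝ) : EuclideanSpace ℝ (Fin n) := WithLp.toLp 2 v

/-- The row space of a matrix, as a subspace of Euclidean space `ℝ^n`. -/
noncomputable def rowSpace {m : Type*} {n : ℕ} (A : Matrix m (Fin n) ℝ) :
    Submodule ℝ (EuclideanSpace ℝ (Fin n)) :=
  Submodule.span ℝ (Set.range fun i => toEuc (A i))

/-- The orthogonal projection matrix onto a subspace of `ℝ^n`. -/
noncomputable def projMat {n : ℕ} (U : Submodule ℝ (EuclideanSpace ℝ (Fin n))) :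
    Matrix (Fin n) (Fin n) ℝ :=
  Matrix.toEuclideanLin.symm (U.subtype ∘ₗ U.orthogonalProjectionOnto.toLinearMap)

/-- The operator (spectral) norm of a matrix. -/
noncomputable def opNorm {m : Type*} [Fintype m] {n : ℕ} (A : Matrix m (Fin n) ℝ) : ℝ :=
  ‖(Matrix.toEuclideanLin A).toContinuousLinearMap‖

/-- Singular values of a matrix, in ascending order. -/
noncomputable def svalAsc {m : Type*} [Fintype m] {n : ℕ} (A : Matrix m (Fin n) ℝ) :
    Fin n → ℝ := fun i =>
  Real.sqrt ((show (Aᵀ * A).IsHermitian by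
      simpa using Matrix.isHermitian_conjTranspose_mul_self A).eigenvalues
    (Tuple.sort (show (Aᵀ * A).IsHermitian by
      simpa using Matrix.isHermitian_conjTranspose_mul_self A).eigenvalues i))

/-- Singular values of a matrix, in descending order (`svalDesc A 0` is the largest). -/
noncomputable def svalDesc {m : Type*} [Fintype m] {n : ℕ} (A : Matrix m (Fin n) ℝ)
    (i : Fin n) : ℝ :=
  svalAsc A i.rev

lemma isHerm_tmul {m : Type*} [Fintype m] {n : ℕ} (A : Matrix m (Fin n) ℝ) :
    (Aᵀ * A).IsHermitian := by
  simpa using Matrix.isHermitian_conjTranspose_mul_self A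

lemma card_eig_eq_finrank_ker {N : ℕ} (A : Matrix (Fin N) (Fin N) ℝ) (hA : A.IsHermitian)
    (μ : ℝ) :
    (Finset.univ.filter fun j => hA.eigenvalues j = μ).card
      = Module.finrank ℝ (LinearMap.ker (A - μ • 1).mulVecLin) := by
  classical
  set U : Matrix (Fin N) (Fin N) ℝ := (hA.eigenvectorUnitary : Matrix (Fin N) (Fin N) ℝ) with hU
  have hUU : U * star U = 1 := (Matrix.mem_unitaryGroup_iff).mp hA.eigenvectorUnitary.2
  have hUU' : star U * U = 1 := (Matrix.mem_unitaryGroup_iff').mp hA.eigenvectorUnitary.2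
  have hUdet : IsUnit U.det := by
    apply (Matrix.isUnit_iff_isUnit_det U).mp
    exact ⟨⟨U, star U, hUU, hUU'⟩, rfl⟩
  have hUdet' : IsUnit (star U).det := by
    apply (Matrix.isUnit_iff_isUnit_det _).mp
    exact ⟨⟨star U, U, hUU', hUU⟩, rfl⟩
  have key : A - μ • 1 = U * diagonal (fun j => hA.eigenvalues j - μ) * star U := by
    conv_lhs => rw [hA.spectral_theorem]
    have h1 : (μ • 1 : Matrix (Fin N) (Fin N) ℝ) = U * (μ • 1) * star U := by
      rw [Matrix.mul_smul, mul_one, Matrix.smul_mul, hUU]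
    simp only [Unitary.conjStarAlgAut_apply, Unitary.coe_star]
    rw [← hU]
    rw [h1]
    rw [← Matrix.sub_mul, ← Matrix.mul_sub]
    congr 1
    congr 1
    rw [smul_one_eq_diagonal, diagonal_sub]
    congr 1
  have hrank : (A - μ • 1).rank = Fintype.card {j // hA.eigenvalues j - μ ≠ 0} := by
    rw [key, rank_mul_eq_left_of_isUnit_det _ _ hUdet',
      rank_mul_eq_right_of_isUnit_det _ _ hUdet, rank_diagonal]
  have hrn : (A - μ • 1).rank + Module.finrank ℝ (LinearMap.ker (A - μ • 1).mulVecLin) = N := by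
    have := LinearMap.finrank_range_add_finrank_ker (A - μ • 1).mulVecLin
    simpa [Matrix.rank] using this
  have hcards : (Finset.univ.filter fun j => hA.eigenvalues j = μ).card
      + Fintype.card {j // hA.eigenvalues j - μ ≠ 0} = N := by
    rw [Fintype.card_subtype]
    have : (Finset.univ.filter fun j => hA.eigenvalues j - μ ≠ 0)
        = Finset.univ.filter fun j => ¬ (hA.eigenvalues j = μ) := by
      apply Finset.filter_congr
      intro j _
      simp [sub_ne_zero]
    rw [this, Finset.card_filter_add_card_filter_not]
    simp
  omega


lemma mem_ker_shift {N : ℕ} (A : Matrix (Fin N) (Fin N) ℝ) (μ : ℝ) (v : Fin N → ℝ) :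
    v ∈ LinearMap.ker (A - μ • 1).mulVecLin ↔ A *ᵥ v = μ • v := by
  rw [LinearMap.mem_ker, mulVecLin_apply, Matrix.sub_mulVec, sub_eq_zero,
    Matrix.smul_mulVec, Matrix.one_mulVec]

lemma finrank_ker_stacked {n p q : ℕ} (V1 : Matrix (Fin n) (Fin p) ℝ)
    (V2 : Matrix (Fin n) (Fin q) ℝ) (h1 : V1ᵀ * V1 = 1) (h2 : V2ᵀ * V2 = 1)
    (c : ℝ) (hc : 0 < c) :
    Module.finrank ℝ (LinearMap.ker ((V1 * V1ᵀ + V2 * V2ᵀ) - (1 + c) • 1).mulVecLin)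
      = Module.finrank ℝ
        (LinearMap.ker (((V1ᵀ * V2)ᵀ * (V1ᵀ * V2)) - (c ^ 2) • 1).mulVecLin) := by
  classical
  set B : Matrix (Fin p) (Fin q) ℝ := V1ᵀ * V2 with hB
  set KM := LinearMap.ker ((V1 * V1ᵀ + V2 * V2ᵀ) - (1 + c) • 1).mulVecLin with hKM
  set KB := LinearMap.ker ((Bᵀ * B) - (c ^ 2) • 1).mulVecLin with hKB
  have hBt : Bᵀ = V2ᵀ * V1 := by rw [hB, Matrix.transpose_mul, Matrix.transpose_transpose]
  have k1 : ∀ x : Fin p → ℝ, V1ᵀ *ᵥ (V1 *ᵥ x) = x := fun x => by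
    rw [Matrix.mulVec_mulVec, h1, Matrix.one_mulVec]
  have k2 : ∀ x : Fin q → ℝ, V2ᵀ *ᵥ (V2 *ᵥ x) = x := fun x => by
    rw [Matrix.mulVec_mulVec, h2, Matrix.one_mulVec]
  have k3 : ∀ x : Fin q → ℝ, V1ᵀ *ᵥ (V2 *ᵥ x) = B *ᵥ x := fun x => by
    rw [Matrix.mulVec_mulVec]
  have k4 : ∀ x : Fin p → ℝ, V2ᵀ *ᵥ (V1 *ᵥ x) = Bᵀ *ᵥ x := fun x => by
    rw [Matrix.mulVec_mulVec, ← hBt]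
  -- facts about members of KM
  have hKMfact : ∀ v ∈ KM, B *ᵥ (V2ᵀ *ᵥ v) = c • (V1ᵀ *ᵥ v)
      ∧ Bᵀ *ᵥ (V1ᵀ *ᵥ v) = c • (V2ᵀ *ᵥ v) := by
    intro v hv
    rw [hKM, mem_ker_shift] at hv
    have hv' : V1 *ᵥ (V1ᵀ *ᵥ v) + V2 *ᵥ (V2ᵀ *ᵥ v) = (1 + c) • v := by
      rw [Matrix.mulVec_mulVec, Matrix.mulVec_mulVec, ← Matrix.add_mulVec, hv]
    constructor
    · have h' := congrArg (fun w => V1ᵀ *ᵥ w) hv'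
      simp only [Matrix.mulVec_add, Matrix.mulVec_smul, k1, k3] at h'
      rw [add_smul, one_smul] at h'
      exact add_left_cancel h'
    · have h' := congrArg (fun w => V2ᵀ *ᵥ w) hv'
      simp only [Matrix.mulVec_add, Matrix.mulVec_smul, k2, k4] at h'
      rw [add_smul, one_smul, add_comm (V2ᵀ *ᵥ v)] at h'
      exact add_right_cancel h'
  -- forward map is injective on KM
  have hmapsto1 : ∀ v ∈ KM, V2ᵀ.mulVecLin v ∈ KB := by
    intro v hv
    obtain ⟨e1, e2⟩ := hKMfact v hv
    rw [hKB, mem_ker_shift, mulVecLin_apply, ← Matrix.mulVec_mulVec, e1,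
      Matrix.mulVec_smul, e2, smul_smul, ← sq]
  have hinj1 : ∀ v ∈ KM, V2ᵀ *ᵥ v = 0 → v = 0 := by
    intro v hv h0
    obtain ⟨e1, e2⟩ := hKMfact v hv
    have hV1 : V1ᵀ *ᵥ v = 0 := by
      rw [h0, Matrix.mulVec_zero] at e1
      exact (smul_eq_zero.mp e1.symm).resolve_left hc.ne'
    have hv' := (mem_ker_shift _ _ _).mp hv
    rw [Matrix.add_mulVec, ← Matrix.mulVec_mulVec, ← Matrix.mulVec_mulVec, h0, hV1,
      Matrix.mulVec_zero, Matrix.mulVec_zero, add_zero] at hv'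
    have h1c : (1 + c) ≠ (0:ℝ) := by positivity
    exact (smul_eq_zero.mp hv'.symm).resolve_left h1c
  -- backward map
  set C : Matrix (Fin n) (Fin q) ℝ := c⁻¹ • (V1 * B) + V2 with hC
  have hCu : ∀ u : Fin q → ℝ, C *ᵥ u = c⁻¹ • (V1 *ᵥ (B *ᵥ u)) + V2 *ᵥ u := by
    intro u
    rw [hC, Matrix.add_mulVec, Matrix.smul_mulVec, ← Matrix.mulVec_mulVec]
  have hV2tC : ∀ u ∈ KB, V2ᵀ *ᵥ (C *ᵥ u) = (c + 1) • u := by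
    intro u hu
    rw [hKB, mem_ker_shift] at hu
    have hu' : Bᵀ *ᵥ (B *ᵥ u) = (c ^ 2) • u := by
      rw [Matrix.mulVec_mulVec, hu]
    rw [hCu, Matrix.mulVec_add, Matrix.mulVec_smul, k2, k4, hu']
    rw [smul_smul, add_smul, one_smul]
    congr 2
    field_simp
  have hmapsto2 : ∀ u ∈ KB, C.mulVecLin u ∈ KM := by
    intro u hu
    have hu0 := hu
    rw [hKB, mem_ker_shift] at hu0
    have hu' : Bᵀ *ᵥ (B *ᵥ u) = (c ^ 2) • u := by
      rw [Matrix.mulVec_mulVec, hu0]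
    rw [hKM, mem_ker_shift, mulVecLin_apply]
    have expand : (V1 * V1ᵀ + V2 * V2ᵀ) *ᵥ (C *ᵥ u)
        = V1 *ᵥ (V1ᵀ *ᵥ (C *ᵥ u)) + V2 *ᵥ (V2ᵀ *ᵥ (C *ᵥ u)) := by
      simp only [Matrix.add_mulVec, ← Matrix.mulVec_mulVec]
    rw [expand, hV2tC u hu]
    have hV1tC : V1ᵀ *ᵥ (C *ᵥ u) = (c⁻¹ + 1) • (B *ᵥ u) := by
      rw [hCu, Matrix.mulVec_add, Matrix.mulVec_smul, k1, k3, add_smul, one_smul]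
    rw [hV1tC, hCu]
    rw [Matrix.mulVec_smul, Matrix.mulVec_smul]
    match_scalars <;> field_simp <;> ring
  have hinj2 : ∀ u ∈ KB, C *ᵥ u = 0 → u = 0 := by
    intro u hu h0
    have := hV2tC u hu
    rw [h0, Matrix.mulVec_zero] at this
    have hc1 : (c + 1) ≠ (0:ℝ) := by positivity
    exact (smul_eq_zero.mp this.symm).resolve_left hc1
  -- conclude
  have F1 : KM →ₗ[ℝ] KB := (V2ᵀ.mulVecLin).restrict hmapsto1
  have F2 : KB →ₗ[ℝ] KM := (C.mulVecLin).restrict hmapsto2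
  have hF1inj : Function.Injective ((V2ᵀ.mulVecLin).restrict hmapsto1) := by
    intro a b hab
    apply Subtype.ext
    have h := congrArg Subtype.val hab
    simp only [LinearMap.restrict_apply, mulVecLin_apply] at h
    have hmem : (a : Fin n → ℝ) - b ∈ KM := sub_mem a.2 b.2
    have h0 : V2ᵀ *ᵥ ((a : Fin n → ℝ) - b) = 0 := by
      rw [Matrix.mulVec_sub, h, sub_self]
    have := hinj1 _ hmem h0
    exact sub_eq_zero.mp this
  have hF2inj : Function.Injective ((C.mulVecLin).restrict hmapsto2) := by
    intro a b hab
    apply Subtype.ext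
    have h := congrArg Subtype.val hab
    simp only [LinearMap.restrict_apply, mulVecLin_apply] at h
    have hmem : (a : Fin q → ℝ) - b ∈ KB := sub_mem a.2 b.2
    have h0 : C *ᵥ ((a : Fin q → ℝ) - b) = 0 := by
      rw [Matrix.mulVec_sub, h, sub_self]
    have := hinj2 _ hmem h0
    exact sub_eq_zero.mp this
  exact le_antisymm (LinearMap.finrank_le_finrank_of_injective hF1inj)
    (LinearMap.finrank_le_finrank_of_injective hF2inj)

lemma svalDesc_antitone {m : Type*} [Fintype m] {n : ℕ} (A : Matrix m (Fin n) ℝ) :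
    Antitone (svalDesc A) := by
  intro a b hab
  have hmono : Monotone (svalAsc A) := by
    intro u v huv
    exact Real.sqrt_le_sqrt
      (Tuple.monotone_sort (isHerm_tmul A).eigenvalues huv)
  exact hmono (Fin.rev_le_rev.mpr hab)

lemma card_sval_gt {m : Type*} [Fintype m] {N : ℕ} (A : Matrix m (Fin N) ℝ) (s : ℝ)
    (hs : 0 ≤ s) :
    (Finset.univ.filter fun j => s < svalDesc A j).card
      = (Finset.univ.filter fun j =>
          s ^ 2 < (isHerm_tmul A).eigenvalues j).card := by
  classical
  set e := (isHerm_tmul A).eigenvalues with he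
  set φ : Equiv.Perm (Fin N) := (Fin.revPerm.trans (Tuple.sort e)) with hφ
  have key : ∀ j, svalDesc A j = Real.sqrt (e (φ j)) := fun j => rfl
  apply Finset.card_nbij' (i := fun j => φ j) (j := fun k => φ.symm k)
  · intro a ha
    simp only [Finset.mem_coe, Finset.mem_filter, Finset.mem_univ, true_and] at ha ⊢
    rw [key, Real.lt_sqrt hs] at ha
    exact ha
  · intro b hb
    simp only [Finset.mem_coe, Finset.mem_filter, Finset.mem_univ, true_and] at hb ⊢
    rw [key, Real.lt_sqrt hs, Equiv.apply_symm_apply]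
    exact hb
  · intro a _; exact φ.symm_apply_apply a
  · intro b _; exact φ.apply_symm_apply b

lemma card_gt_transfer {n q : ℕ} (eM : Fin n → ℝ) (eB : Fin q → ℝ) (x : ℝ) (hx : 1 < x)
    (hmult : ∀ μ : ℝ, 1 < μ →
      (Finset.univ.filter fun j => eM j = μ).card
        = (Finset.univ.filter fun k => eB k = (μ - 1) ^ 2).card) :
    (Finset.univ.filter fun j => x < eM j).card
      = (Finset.univ.filter fun k => (x - 1) ^ 2 < eB k).card := by
  classical
  set t : Finset ℝ := (Finset.univ.image eM).filter (fun μ => x < μ) with ht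
  set t' : Finset ℝ := (Finset.univ.image eB).filter (fun ν => (x - 1) ^ 2 < ν) with ht'
  have hlhs : (Finset.univ.filter fun j => x < eM j).card
      = ∑ μ ∈ t, (Finset.univ.filter fun j => eM j = μ).card := by
    rw [Finset.card_eq_sum_card_fiberwise (f := eM) (t := t)]
    · apply Finset.sum_congr rfl
      intro μ hμ
      congr 1
      rw [Finset.filter_filter]
      apply Finset.filter_congr
      intro j _
      simp only [ht, Finset.mem_filter] at hμ
      constructor
      · exact fun h => h.2
      · exact fun h => ⟨h ▸ hμ.2, h⟩
    · intro j hj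
      simp only [Finset.mem_coe, Finset.mem_filter, Finset.mem_univ, true_and] at hj
      simp only [Finset.mem_coe, ht, Finset.mem_filter, Finset.mem_image]
      exact ⟨⟨j, Finset.mem_univ j, rfl⟩, hj⟩
  have hrhs : (Finset.univ.filter fun k => (x - 1) ^ 2 < eB k).card
      = ∑ ν ∈ t', (Finset.univ.filter fun k => eB k = ν).card := by
    rw [Finset.card_eq_sum_card_fiberwise (f := eB) (t := t')]
    · apply Finset.sum_congr rfl
      intro ν hν
      congr 1
      rw [Finset.filter_filter]
      apply Finset.filter_congr
      intro k _
      simp only [ht', Finset.mem_filter] at hν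
      constructor
      · exact fun h => h.2
      · exact fun h => ⟨h ▸ hν.2, h⟩
    · intro k hk
      simp only [Finset.mem_coe, Finset.mem_filter, Finset.mem_univ, true_and] at hk
      simp only [Finset.mem_coe, ht', Finset.mem_filter, Finset.mem_image]
      exact ⟨⟨k, Finset.mem_univ k, rfl⟩, hk⟩
  rw [hlhs, hrhs]
  apply Finset.sum_nbij' (i := fun μ => (μ - 1) ^ 2) (j := fun ν => 1 + Real.sqrt ν)
  · -- hi : maps t into t'
    intro μ hμ
    simp only [ht, Finset.mem_filter, Finset.mem_image] at hμ
    obtain ⟨⟨j, _, hj⟩, hxμ⟩ := hμ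
    have hμ1 : 1 < μ := lt_trans hx hxμ
    have hcard := hmult μ hμ1
    have hpos : 0 < (Finset.univ.filter fun k => eB k = (μ - 1) ^ 2).card := by
      rw [← hcard]
      apply Finset.card_pos.mpr
      exact ⟨j, by simp [hj]⟩
    obtain ⟨k, hk⟩ := Finset.card_pos.mp hpos
    simp only [Finset.mem_filter, Finset.mem_univ, true_and] at hk
    simp only [ht', Finset.mem_filter, Finset.mem_image]
    refine ⟨⟨k, Finset.mem_univ k, hk⟩, ?_⟩
    have : x - 1 < μ - 1 := by linarith
    exact pow_lt_pow_left₀ this (by linarith) (by norm_num)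
  · -- hj : maps t' into t
    intro ν hν
    simp only [ht', Finset.mem_filter, Finset.mem_image] at hν
    obtain ⟨⟨k, _, hk⟩, hxν⟩ := hν
    have hν0 : 0 < ν := lt_of_le_of_lt (sq_nonneg _) hxν
    have hgt : x < 1 + Real.sqrt ν := by
      have : x - 1 < Real.sqrt ν := (Real.lt_sqrt (by linarith)).mpr hxν
      linarith
    have hμ1 : 1 < 1 + Real.sqrt ν := lt_trans hx hgt
    have hsq : (1 + Real.sqrt ν - 1) ^ 2 = ν := by
      rw [add_sub_cancel_left, Real.sq_sqrt hν0.le]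
    have hcard := hmult (1 + Real.sqrt ν) hμ1
    rw [hsq] at hcard
    have hpos : 0 < (Finset.univ.filter fun j => eM j = 1 + Real.sqrt ν).card := by
      rw [hcard]
      apply Finset.card_pos.mpr
      exact ⟨k, by simp [hk]⟩
    obtain ⟨j, hj⟩ := Finset.card_pos.mp hpos
    simp only [Finset.mem_filter, Finset.mem_univ, true_and] at hj
    simp only [ht, Finset.mem_filter, Finset.mem_image]
    exact ⟨⟨j, Finset.mem_univ j, hj⟩, hgt⟩
  · -- left inverse
    intro μ hμ
    simp only [ht, Finset.mem_filter] at hμ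
    rw [Real.sqrt_sq (by linarith [hμ.2] : (0:ℝ) ≤ μ - 1)]
    ring
  · -- right inverse
    intro ν hν
    simp only [ht', Finset.mem_filter] at hν
    have hν0 : 0 ≤ ν := le_trans (sq_nonneg _) hν.2.le
    rw [add_sub_cancel_left, Real.sq_sqrt hν0]
  · -- values
    intro μ hμ
    simp only [ht, Finset.mem_filter] at hμ
    exact hmult μ (lt_trans hx hμ.2)

lemma antitone_eval_at {q : ℕ} (g : Fin q → ℝ) (hg : Antitone g) (c : ℝ) (i : Fin q)
    (hcard : (Finset.univ.filter fun k => c < g k).card = i.val)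
    (hex : ∃ k, g k = c) : g i = c := by
  classical
  set S : Finset (Fin q) := Finset.univ.filter fun k => c < g k with hS
  have hsub : Finset.Iio i ⊆ S := by
    intro k hk
    rw [Finset.mem_Iio] at hk
    by_contra hkS
    simp only [hS, Finset.mem_filter, Finset.mem_univ, true_and, not_lt] at hkS
    -- g k ≤ c, k < i : then S ⊆ Iio k, card contradiction
    have hSsub : S ⊆ Finset.Iio k := by
      intro k' hk'
      simp only [hS, Finset.mem_filter, Finset.mem_univ, true_and] at hk'
      rw [Finset.mem_Iio]
      by_contra hkk
      push_neg at hkk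
      exact absurd (lt_of_lt_of_le hk' (hg hkk)) (not_lt.mpr hkS)
    have := Finset.card_le_card hSsub
    rw [hcard, Fin.card_Iio] at this
    omega
  have hcards : S.card ≤ (Finset.Iio i).card := by rw [hcard, Fin.card_Iio]
  have hSeq : Finset.Iio i = S := Finset.eq_of_subset_of_card_le hsub hcards
  have hile : g i ≤ c := by
    have : i ∉ S := by
      rw [← hSeq, Finset.mem_Iio]
      exact lt_irrefl i
    simp only [hS, Finset.mem_filter, Finset.mem_univ, true_and, not_lt] at this
    exact this
  obtain ⟨k0, hk0⟩ := hex
  have hk0S : k0 ∉ S := by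
    simp only [hS, Finset.mem_filter, Finset.mem_univ, true_and, not_lt]
    exact hk0.le
  have : i ≤ k0 := by
    rw [← hSeq, Finset.mem_Iio] at hk0S
    exact not_lt.mp hk0S
  have := hg this
  rw [hk0] at this
  linarith

/-- for the stacked matrix `M = [V₁ᵀ; V₂ᵀ]` of two orthonormal basis
matrices, if `(uM, vM, σ)` is an `i`-th singular triple of `M` with `σ` simple and
`σ > 1`, then `uM = [u₁; u₂]/√2` where `(u₁, u₂)` is an `i`-th pair of left/right
singular vectors of `V₁ᵀ V₂` (with singular value `σ² − 1`), and
`vM = (V₁ u₁ + V₂ u₂) / (√2 σ)` — the scaled sum of the `i`-th pair of principal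
vectors `p_i = V₁ u₁` and `q_i = V₂ u₂`. -/
theorem stacked_singular_vectors_decompose (n p q : ℕ) (hpn : p ≤ n) (hqn : q ≤ n)
    (V1 : Matrix (Fin n) (Fin p) ℝ) (V2 : Matrix (Fin n) (Fin q) ℝ)
    (h1 : V1ᵀ * V1 = 1) (h2 : V2ᵀ * V2 = 1)
    (M : Matrix (Fin p ⊕ Fin q) (Fin n) ℝ) (hM : M = Matrix.fromRows V1ᵀ V2ᵀ)
    (i : Fin (min p q)) (σ : ℝ)
    (hσ : σ = svalDesc M (Fin.castLE (le_trans (min_le_left p q) hpn) i)) (hσ1 : 1 < σ)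
    (hsimple : ∀ j : Fin n, j ≠ Fin.castLE (le_trans (min_le_left p q) hpn) i →
      svalDesc M j ≠ σ)
    (uM : (Fin p ⊕ Fin q) → ℝ) (vM : Fin n → ℝ)
    (huM : ∑ x, uM x ^ 2 = 1) (hvM : ∑ j, vM j ^ 2 = 1)
    (htriple1 : M.mulVec vM = σ • uM) (htriple2 : Mᵀ.mulVec uM = σ • vM) :
    ∃ (u1 : Fin p → ℝ) (u2 : Fin q → ℝ),
      (∑ a, u1 a ^ 2 = 1) ∧ (∑ b, u2 b ^ 2 = 1) ∧
      (V1ᵀ * V2).mulVec u2 = (σ ^ 2 - 1) • u1 ∧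
      (V1ᵀ * V2)ᵀ.mulVec u1 = (σ ^ 2 - 1) • u2 ∧
      σ ^ 2 - 1 = svalDesc (V1ᵀ * V2) (Fin.castLE (min_le_right p q) i) ∧
      uM = Sum.elim (fun a => u1 a / Real.sqrt 2) (fun b => u2 b / Real.sqrt 2) ∧
      vM = (1 / (Real.sqrt 2 * σ)) • (V1.mulVec u1 + V2.mulVec u2) := by
  classical
  have hσ0 : (0:ℝ) < σ := lt_trans one_pos hσ1
  have hc : (0:ℝ) < σ ^ 2 - 1 := by nlinarith
  set a : Fin p → ℝ := fun x => uM (Sum.inl x) with ha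
  set b : Fin q → ℝ := fun x => uM (Sum.inr x) with hb
  have huM_elim : uM = Sum.elim a b := by funext x; cases x <;> rfl
  have k1 : ∀ x : Fin p → ℝ, V1ᵀ *ᵥ (V1 *ᵥ x) = x := fun x => by
    rw [Matrix.mulVec_mulVec, h1, Matrix.one_mulVec]
  have k2 : ∀ x : Fin q → ℝ, V2ᵀ *ᵥ (V2 *ᵥ x) = x := fun x => by
    rw [Matrix.mulVec_mulVec, h2, Matrix.one_mulVec]
  have hT1 : V1ᵀ *ᵥ vM = σ • a := by
    funext x
    have h := congrFun htriple1 (Sum.inl x)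
    rw [hM, fromRows_mulVec] at h
    simpa using h
  have hT2 : V2ᵀ *ᵥ vM = σ • b := by
    funext x
    have h := congrFun htriple1 (Sum.inr x)
    rw [hM, fromRows_mulVec] at h
    simpa using h
  have hMt : Mᵀ = fromCols V1 V2 := by
    rw [hM, transpose_fromRows, transpose_transpose, transpose_transpose]
  have hT3 : V1 *ᵥ a + V2 *ᵥ b = σ • vM := by
    rw [hMt, huM_elim, fromCols_mulVec_sumElim] at htriple2
    exact htriple2
  have hBb : (V1ᵀ * V2) *ᵥ b = (σ ^ 2 - 1) • a := by
    have h : V2 *ᵥ b = σ • vM - V1 *ᵥ a := eq_sub_of_add_eq' hT3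
    rw [← Matrix.mulVec_mulVec, h, Matrix.mulVec_sub, Matrix.mulVec_smul, hT1, k1]
    match_scalars; ring
  have hBta : (V1ᵀ * V2)ᵀ *ᵥ a = (σ ^ 2 - 1) • b := by
    have h : V1 *ᵥ a = σ • vM - V2 *ᵥ b := eq_sub_of_add_eq hT3
    rw [Matrix.transpose_mul, Matrix.transpose_transpose, ← Matrix.mulVec_mulVec, h,
      Matrix.mulVec_sub, Matrix.mulVec_smul, hT2, k2]
    match_scalars; ring
  -- norms of the two halves
  have hsum : (∑ x, a x ^ 2) + (∑ x, b x ^ 2) = 1 := by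
    rw [Fintype.sum_sum_type] at huM
    exact huM
  have hdot : (σ ^ 2 - 1) * (a ⬝ᵥ a) = (σ ^ 2 - 1) * (b ⬝ᵥ b) := by
    have e1 : a ⬝ᵥ ((V1ᵀ * V2) *ᵥ b) = (σ ^ 2 - 1) * (a ⬝ᵥ a) := by
      rw [hBb, dotProduct_smul, smul_eq_mul]
    have e2 : a ⬝ᵥ ((V1ᵀ * V2) *ᵥ b) = ((V1ᵀ * V2)ᵀ *ᵥ a) ⬝ᵥ b := by
      rw [Matrix.dotProduct_mulVec]
      congr 1
      rw [← Matrix.vecMul_transpose, Matrix.transpose_transpose]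
    have e3 : ((V1ᵀ * V2)ᵀ *ᵥ a) ⬝ᵥ b = (σ ^ 2 - 1) * (b ⬝ᵥ b) := by
      rw [hBta, smul_dotProduct, smul_eq_mul]
    rw [← e1, e2, e3]
  have hdp : ∀ {k : ℕ} (v : Fin k → ℝ), v ⬝ᵥ v = ∑ x, v x ^ 2 := by
    intro k v
    simp [dotProduct, pow_two]
  have hla : ∑ x, a x ^ 2 = 1 / 2 := by
    rw [hdp a, hdp b] at hdot
    have := mul_left_cancel₀ hc.ne' hdot
    linarith
  have hlb : ∑ x, b x ^ 2 = 1 / 2 := by linarith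
  have hs2 : Real.sqrt 2 ≠ 0 := by positivity
  have hs2sq : (Real.sqrt 2) ^ 2 = 2 := Real.sq_sqrt (by norm_num)
  refine ⟨Real.sqrt 2 • a, Real.sqrt 2 • b, ?_, ?_, ?_, ?_, ?_, ?_, ?_⟩
  · simp only [Pi.smul_apply, smul_eq_mul, mul_pow, hs2sq, ← Finset.mul_sum, hla]
    norm_num
  · simp only [Pi.smul_apply, smul_eq_mul, mul_pow, hs2sq, ← Finset.mul_sum, hlb]
    norm_num
  · rw [Matrix.mulVec_smul, hBb, smul_comm]
  · rw [Matrix.mulVec_smul, hBta, smul_comm]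
  · -- the singular value index claim
    set c : ℝ := σ ^ 2 - 1 with hcdef
    set eM : Fin n → ℝ := (isHerm_tmul M).eigenvalues with heM
    set eB : Fin q → ℝ := (isHerm_tmul (V1ᵀ * V2)).eigenvalues
      with heB
    set i' : Fin n := Fin.castLE (le_trans (min_le_left p q) hpn) i with hi'
    set i'' : Fin q := Fin.castLE (min_le_right p q) i with hi''
    have hMtM : Mᵀ * M = V1 * V1ᵀ + V2 * V2ᵀ := by
      rw [hM, transpose_fromRows, fromCols_mul_fromRows, transpose_transpose,
        transpose_transpose]
    have hcountM : (Finset.univ.filter fun j => σ < svalDesc M j).card = i.val := by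
      have hset : (Finset.univ.filter fun j => σ < svalDesc M j) = Finset.Iio i' := by
        ext j
        simp only [Finset.mem_filter, Finset.mem_univ, true_and, Finset.mem_Iio]
        constructor
        · intro hj
          by_contra hcon
          push_neg at hcon
          have := svalDesc_antitone M hcon
          rw [← hσ] at this
          linarith
        · intro hj
          have hle := svalDesc_antitone M hj.le
          rw [← hσ] at hle
          have hne := hsimple j (ne_of_lt hj)
          exact lt_of_le_of_ne hle (Ne.symm hne)
      rw [hset, Fin.card_Iio, hi']
      simp
    have hmult : ∀ μ : ℝ, 1 < μ →
        (Finset.univ.filter fun j => eM j = μ).card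
          = (Finset.univ.filter fun k => eB k = (μ - 1) ^ 2).card := by
      intro μ hμ
      rw [heM, heB, card_eig_eq_finrank_ker (Mᵀ * M) (isHerm_tmul M) μ,
        card_eig_eq_finrank_ker ((V1ᵀ * V2)ᵀ * (V1ᵀ * V2))
          (isHerm_tmul (V1ᵀ * V2)) ((μ - 1) ^ 2)]
      have h := finrank_ker_stacked V1 V2 h1 h2 (μ - 1) (by linarith)
      rw [show (1 : ℝ) + (μ - 1) = μ from by ring, ← hMtM] at h
      exact h
    have hcM : (Finset.univ.filter fun j => σ ^ 2 < eM j).card = i.val := by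
      rw [← card_sval_gt M σ hσ0.le]
      exact hcountM
    have hcB : (Finset.univ.filter fun k => c < svalDesc (V1ᵀ * V2) k).card = i.val := by
      rw [card_sval_gt (V1ᵀ * V2) c hc.le]
      have h := card_gt_transfer eM eB (σ ^ 2) (by nlinarith) hmult
      rw [hcM] at h
      rw [← heB]
      convert h.symm using 3
    -- existence of the singular value c for B
    have hbne : b ≠ 0 := by
      intro h0
      rw [h0] at hlb
      simp at hlb
    have hbmem : b ∈ LinearMap.ker (((V1ᵀ * V2)ᵀ * (V1ᵀ * V2)) - (c ^ 2) • 1).mulVecLin := by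
      rw [mem_ker_shift, ← Matrix.mulVec_mulVec, hBb, Matrix.mulVec_smul, hBta, smul_smul,
        hcdef, ← sq]
    have hex : ∃ k, svalDesc (V1ᵀ * V2) k = c := by
      have hpos : 0 < (Finset.univ.filter fun k => eB k = c ^ 2).card := by
        rw [heB, card_eig_eq_finrank_ker ((V1ᵀ * V2)ᵀ * (V1ᵀ * V2))
          (isHerm_tmul (V1ᵀ * V2)) (c ^ 2)]
        rw [Module.finrank_pos_iff_exists_ne_zero]
        refine ⟨⟨b, hbmem⟩, ?_⟩
        intro hcon
        apply hbne
        exact congrArg Subtype.val hcon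
      obtain ⟨k, hk⟩ := Finset.card_pos.mp hpos
      simp only [Finset.mem_filter, Finset.mem_univ, true_and] at hk
      set φ : Equiv.Perm (Fin q) := (Fin.revPerm.trans (Tuple.sort eB)) with hφ
      refine ⟨φ.symm k, ?_⟩
      have hkey : svalDesc (V1ᵀ * V2) (φ.symm k) = Real.sqrt (eB (φ (φ.symm k))) := rfl
      rw [hkey, Equiv.apply_symm_apply, hk, Real.sqrt_sq hc.le]
    have := antitone_eval_at (svalDesc (V1ᵀ * V2)) (svalDesc_antitone (V1ᵀ * V2)) c i''
      (by rw [hcB, hi'']; simp) hex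
    rw [← this]
  · rw [huM_elim]
    funext x
    cases x with
    | inl x => simp only [Sum.elim_inl, Pi.smul_apply, smul_eq_mul]; field_simp
    | inr x => simp only [Sum.elim_inr, Pi.smul_apply, smul_eq_mul]; field_simp
  · rw [Matrix.mulVec_smul, Matrix.mulVec_smul, ← smul_add, hT3, smul_smul, smul_smul]
    rw [show 1 / (Real.sqrt 2 * σ) * Real.sqrt 2 * σ = 1 from by field_simp, one_smul]
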